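/- If A is a linear endomorphism of a finite-dimensional real inner product space V such that ρ(A)² > σ₁(A)·σ₂(A), where ρ(A) is the spectral radius and σ₁(A), σ₂(A) are the two largest singular values of A, then A is proximal, i.e., A has a unique eigenvalue of maximum modulus and that eigenvalue is simple. -/

import Mathlib

set_option maxHeartbeats 1600000

open Polynomial Module RealInnerProductSpace


lemma eval_charpoly' {n : Type*} [Fintype n] [DecidableEq n] {R : Type*} [CommRing R]
    (M : Matrix n n R) (t : R) :
    M.charpoly.eval t = (t • (1 : Matrix n n R) - M).det := by
  have h2 : (Matrix.charmatrix M).map (Polynomial.evalRingHom t) = t • 1 - M := by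
    ext i j
    by_cases hij : i = j
    · subst hij; simp [Matrix.charmatrix_apply_eq]
    · simp [Matrix.charmatrix_apply_ne _ _ _ hij, Matrix.one_apply_ne hij]
  rw [Matrix.charpoly]
  exact (RingHom.map_det (Polynomial.evalRingHom t) (Matrix.charmatrix M)).trans
    (by rw [RingHom.mapMatrix_apply, h2])



open Polynomial

variable {V : Type*} [NormedAddCommGroup V] [InnerProductSpace ℝ V] [FiniteDimensional ℝ V]

/-- The multiset of complex eigenvalues of a real endomorphism (roots of the
characteristic polynomial over `ℂ`, with multiplicity). -/
noncomputable def complexEigenvalues (A : V →ₗ[ℝ] V) : Multiset ℂ :=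
  ((A.charpoly).map (algebraMap ℝ ℂ)).roots

/-- The spectral radius: the largest modulus of a complex eigenvalue. -/
noncomputable def specRadius (A : V →ₗ[ℝ] V) : ℝ :=
  sSup {r : ℝ | ∃ z ∈ complexEigenvalues A, ‖z‖ = r}

/-- `A` is proximal: it has a unique eigenvalue of maximum modulus and that
eigenvalue is algebraically simple. -/
def IsProximal (A : V →ₗ[ℝ] V) : Prop :=
  ∃ z ∈ complexEigenvalues A, (complexEigenvalues A).count z = 1 ∧
    ∀ w ∈ complexEigenvalues A, w ≠ z → ‖w‖ < ‖z‖

/-- The `i`-th singular value (`i = 1` being the largest), via the min-max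
characterisation `σ_i(A) = min { ‖A - F‖ : rank F < i }`. -/
noncomputable def singularValue (A : V →L[ℝ] V) (i : ℕ) : ℝ :=
  sInf {r : ℝ | ∃ F : V →L[ℝ] V, LinearMap.rank (F : V →ₗ[ℝ] V) < (i : Cardinal) ∧ r = ‖A - F‖}

lemma exists_pair (T : V →ₗ[ℝ] V) {z : ℂ}
    (hz : z ∈ ((T.charpoly).map (algebraMap ℝ ℂ)).roots) :
    ∃ x y : V, ¬(x = 0 ∧ y = 0) ∧ T x = z.re • x - z.im • y ∧ T y = z.im • x + z.re • y := by
  classical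
  set b := Module.finBasis ℝ V with hb
  set M := LinearMap.toMatrix b b T with hM
  have hchar : (T.charpoly).map (algebraMap ℝ ℂ) = (M.map (algebraMap ℝ ℂ)).charpoly := by
    rw [Matrix.charpoly_map, LinearMap.charpoly_toMatrix]
  have hroot : ((M.map (algebraMap ℝ ℂ)).charpoly).IsRoot z := by
    rw [← hchar]; exact Polynomial.isRoot_of_mem_roots hz
  have hdet : (z • (1 : Matrix _ _ ℂ) - M.map (algebraMap ℝ ℂ)).det = 0 := by
    rw [← eval_charpoly']; exact hroot
  obtain ⟨v, hv0, hv⟩ := (Matrix.exists_mulVec_eq_zero_iff).mpr hdet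
  have hMv : (M.map (algebraMap ℝ ℂ)).mulVec v = z • v := by
    rw [Matrix.sub_mulVec, Matrix.smul_mulVec, Matrix.one_mulVec, sub_eq_zero] at hv
    exact hv.symm
  set a : Fin (Module.finrank ℝ V) → ℝ := fun i => (v i).re with ha
  set c : Fin (Module.finrank ℝ V) → ℝ := fun i => (v i).im with hc
  have key : ∀ i, (M.mulVec a) i = z.re * a i - z.im * c i ∧
      (M.mulVec c) i = z.im * a i + z.re * c i := by
    intro i
    have h1 := congrFun hMv i
    simp only [Matrix.mulVec, dotProduct, Matrix.map_apply, Pi.smul_apply,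
      smul_eq_mul] at h1
    have hre := congrArg Complex.re h1
    have him := congrArg Complex.im h1
    simp only [Complex.re_sum, Complex.im_sum, Complex.mul_re, Complex.mul_im,
      Complex.coe_algebraMap, Complex.ofReal_re, Complex.ofReal_im, zero_mul, sub_zero,
      zero_add, add_zero] at hre him
    constructor
    · simp only [Matrix.mulVec, dotProduct, ha, hc]; linarith [hre]
    · simp only [Matrix.mulVec, dotProduct, ha, hc]; linarith [him]
  set x : V := b.equivFun.symm a with hx
  set y : V := b.equivFun.symm c with hy
  have hax : ⇑(b.repr x) = a := by
    funext i
    rw [← b.equivFun_apply, hx, LinearEquiv.apply_symm_apply]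
  have hcy : ⇑(b.repr y) = c := by
    funext i
    rw [← b.equivFun_apply, hy, LinearEquiv.apply_symm_apply]
  have hTx : T x = z.re • x - z.im • y := by
    have hrepr := LinearMap.toMatrix_mulVec_repr b b T x
    rw [hax, ← hM] at hrepr
    have hco : ⇑(b.repr (T x)) = ⇑(b.repr (z.re • x - z.im • y)) := by
      rw [← hrepr]
      funext i
      simp only [map_sub, map_smul, Finsupp.coe_sub, Finsupp.coe_smul, Pi.sub_apply,
        Pi.smul_apply, hax, hcy, smul_eq_mul]
      exact (key i).1
    exact b.repr.injective (DFunLike.coe_injective hco)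
  have hTy : T y = z.im • x + z.re • y := by
    have hrepr := LinearMap.toMatrix_mulVec_repr b b T y
    rw [hcy, ← hM] at hrepr
    have hco : ⇑(b.repr (T y)) = ⇑(b.repr (z.im • x + z.re • y)) := by
      rw [← hrepr]
      funext i
      simp only [map_add, map_smul, Finsupp.coe_add, Finsupp.coe_smul, Pi.add_apply,
        Pi.smul_apply, hax, hcy, smul_eq_mul]
      exact (key i).2
    exact b.repr.injective (DFunLike.coe_injective hco)
  refine ⟨x, y, ?_, hTx, hTy⟩
  rintro ⟨hx0, hy0⟩
  apply hv0
  funext i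
  have h1 : a = 0 := by rw [← hax, hx0]; simp
  have h2 : c = 0 := by rw [← hcy, hy0]; simp
  have := congrFun h1 i
  have := congrFun h2 i
  apply Complex.ext <;> simpa [ha, hc] using ‹_›

lemma det_restrict_span (T : V →ₗ[ℝ] V) {v w : V} (hvw : LinearIndependent ℝ ![v, w])
    {a b c d : ℝ} (hv : T v = a • v + b • w) (hw : T w = c • v + d • w) :
    ∃ (W : Submodule ℝ V) (hW : ∀ x ∈ W, T x ∈ W),
      Module.finrank ℝ W = 2 ∧ LinearMap.det (T.restrict hW) = a * d - b * c := by
  classical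
  set W : Submodule ℝ V := Submodule.span ℝ (Set.range ![v, w]) with hWdef
  have hvW : v ∈ W := Submodule.subset_span ⟨0, rfl⟩
  have hwW : w ∈ W := Submodule.subset_span ⟨1, rfl⟩
  have hW : ∀ x ∈ W, T x ∈ W := by
    intro x hx
    induction hx using Submodule.span_induction with
    | mem x hx =>
      obtain ⟨i, rfl⟩ := hx
      fin_cases i
      · show T v ∈ W
        rw [hv]; exact add_mem (Submodule.smul_mem _ _ hvW) (Submodule.smul_mem _ _ hwW)
      · show T w ∈ W
        rw [hw]; exact add_mem (Submodule.smul_mem _ _ hvW) (Submodule.smul_mem _ _ hwW)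
    | zero => simp
    | add x y _ _ hx hy => rw [map_add]; exact add_mem hx hy
    | smul r x _ hx => rw [map_smul]; exact Submodule.smul_mem _ _ hx
  have hfr : Module.finrank ℝ W = 2 := by
    rw [hWdef, finrank_span_eq_card hvw]
    simp
  refine ⟨W, hW, hfr, ?_⟩
  set bW : Basis (Fin 2) ℝ W := Basis.span hvw with hbW
  have hb0 : (bW 0 : V) = v := by rw [hbW]; exact congrArg Subtype.val (Module.Basis.span_apply hvw 0)
  have hb1 : (bW 1 : V) = w := by rw [hbW]; exact congrArg Subtype.val (Module.Basis.span_apply hvw 1)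
  have hB0 : (T.restrict hW) (bW 0) = a • bW 0 + b • bW 1 := by
    apply Subtype.ext
    simp only [LinearMap.restrict_apply, Submodule.coe_add, Submodule.coe_smul, hb0, hb1]
    exact hv
  have hB1 : (T.restrict hW) (bW 1) = c • bW 0 + d • bW 1 := by
    apply Subtype.ext
    simp only [LinearMap.restrict_apply, Submodule.coe_add, Submodule.coe_smul, hb0, hb1]
    exact hw
  have hmat : LinearMap.toMatrix bW bW (T.restrict hW) = !![a, c; b, d] := by
    ext i j
    fin_cases j <;> fin_cases i <;>
      simp [LinearMap.toMatrix_apply, hB0, hB1, Basis.repr_self]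
  rw [← LinearMap.det_toMatrix bW, hmat, Matrix.det_fin_two_of]
  ring

lemma singularValue_one (A : V →L[ℝ] V) : singularValue A 1 = ‖A‖ := by
  have hset : {r : ℝ | ∃ F : V →L[ℝ] V, LinearMap.rank (F : V →ₗ[ℝ] V) < ((1 : ℕ) : Cardinal) ∧
      r = ‖A - F‖} = {‖A‖} := by
    ext r
    constructor
    · rintro ⟨F, hF, rfl⟩
      rw [Nat.cast_one] at hF
      have h0 : LinearMap.rank (F : V →ₗ[ℝ] V) = 0 := Cardinal.lt_one_iff_zero.mp hF
      rw [LinearMap.rank] at h0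
      have hFrange : LinearMap.range (F : V →ₗ[ℝ] V) = ⊥ := Submodule.rank_eq_zero.mp h0
      have hF0 : F = 0 := by
        ext x
        have : F x ∈ LinearMap.range (F : V →ₗ[ℝ] V) := ⟨x, rfl⟩
        rw [hFrange] at this
        simpa using this
      simp [hF0]
    · rintro rfl
      refine ⟨0, ?_, by simp⟩
      rw [Nat.cast_one]
      simp
  rw [singularValue, hset, csInf_singleton]

lemma singularValue_two_nonneg (A : V →L[ℝ] V) : 0 ≤ singularValue A 2 :=
  Real.sInf_nonneg (by rintro r ⟨F, hF, rfl⟩; exact norm_nonneg _)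

lemma key_det_le (A : V →L[ℝ] V) {W : Submodule ℝ V}
    (hW : ∀ x ∈ W, (A : V →ₗ[ℝ] V) x ∈ W) (hfr : Module.finrank ℝ W = 2) :
    |LinearMap.det ((A : V →ₗ[ℝ] V).restrict hW)| ≤ singularValue A 1 * singularValue A 2 := by
  classical
  set T : V →ₗ[ℝ] V := (A : V →ₗ[ℝ] V) with hT
  set B : W →ₗ[ℝ] W := T.restrict hW with hB
  have main : ∀ F : V →L[ℝ] V, LinearMap.rank (F : V →ₗ[ℝ] V) < (2 : Cardinal) →
      |LinearMap.det B| ≤ ‖A - F‖ * ‖A‖ := by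
    intro F hFrank
    set F' : V →ₗ[ℝ] V := (F : V →ₗ[ℝ] V) with hF'
    -- find a unit vector in ker F ⊓ W
    have hrange : Module.finrank ℝ (LinearMap.range F') < 2 := by
      have hc : (Module.finrank ℝ (LinearMap.range F') : Cardinal) < ((2 : ℕ) : Cardinal) := by
        rw [Module.finrank_eq_rank]
        simpa using hFrank
      exact_mod_cast hc
    have hker1 : 1 ≤ Module.finrank ℝ ((LinearMap.ker F' ⊓ W : Submodule ℝ V)) := by
      have h1 := LinearMap.finrank_range_add_finrank_ker F'
      have h3 := Submodule.finrank_sup_add_finrank_inf_eq (LinearMap.ker F') W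
      have h4 : Module.finrank ℝ ((LinearMap.ker F' ⊔ W : Submodule ℝ V)) ≤ Module.finrank ℝ V :=
        Submodule.finrank_le _
      have h5 : Module.finrank ℝ (LinearMap.ker F') ≤ Module.finrank ℝ V :=
        Submodule.finrank_le _
      omega
    have hne1 : (LinearMap.ker F' ⊓ W : Submodule ℝ V) ≠ ⊥ := by
      intro hbot
      rw [hbot] at hker1
      simp at hker1
    obtain ⟨x0, hx0mem, hx0ne⟩ := Submodule.ne_bot_iff _ |>.mp hne1
    set u : V := ‖x0‖⁻¹ • x0 with hu
    have hunorm : ‖u‖ = 1 := norm_smul_inv_norm hx0ne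
    have humem : u ∈ LinearMap.ker F' ⊓ W := Submodule.smul_mem _ _ hx0mem
    have huW : u ∈ W := humem.2
    have huker : F' u = 0 := humem.1
    have hune : u ≠ 0 := by intro h; rw [h, norm_zero] at hunorm; norm_num at hunorm
    -- find a unit vector in W orthogonal to u
    have hspan : (Submodule.span ℝ {u} : Submodule ℝ V) ≤ W := by
      rw [Submodule.span_le]; simpa using huW
    have horthrank := Submodule.finrank_add_inf_finrank_orthogonal hspan
    rw [finrank_span_singleton hune, hfr] at horthrank
    have hne2 : ((Submodule.span ℝ {u})ᗮ ⊓ W : Submodule ℝ V) ≠ ⊥ := by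
      intro hbot
      rw [hbot] at horthrank
      simp at horthrank
    obtain ⟨y0, hy0mem, hy0ne⟩ := Submodule.ne_bot_iff _ |>.mp hne2
    set y : V := ‖y0‖⁻¹ • y0 with hy
    have hynorm : ‖y‖ = 1 := norm_smul_inv_norm hy0ne
    have hymem : y ∈ (Submodule.span ℝ {u})ᗮ ⊓ W := Submodule.smul_mem _ _ hy0mem
    have hyW : y ∈ W := hymem.2
    have huy : (inner ℝ u y) = 0 :=
      hymem.1 u (Submodule.mem_span_singleton_self u)
    -- orthonormal basis of W
    set u' : W := ⟨u, huW⟩ with hu'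
    set y' : W := ⟨y, hyW⟩ with hy'
    have hinner_uu : (inner ℝ u' u') = 1 := by
      rw [Submodule.coe_inner]
      simp only [hu']
      rw [real_inner_self_eq_norm_mul_norm, hunorm]; norm_num
    have hinner_yy : (inner ℝ y' y') = 1 := by
      rw [Submodule.coe_inner]
      simp only [hy']
      rw [real_inner_self_eq_norm_mul_norm, hynorm]; norm_num
    have hinner_uy : (inner ℝ u' y') = 0 := by rw [Submodule.coe_inner]; exact huy
    have hinner_yu : (inner ℝ y' u') = 0 := by rw [Submodule.coe_inner, real_inner_comm]; exact huy
    have hli : LinearIndependent ℝ ![u', y'] := by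
      have horth : Orthonormal ℝ ![u', y'] := by
        rw [orthonormal_iff_ite]
        intro i j
        fin_cases i <;> fin_cases j <;>
          simp [hinner_uu, hinner_yy, hinner_uy, hinner_yu, hu', hy', hunorm, hynorm, huy, real_inner_comm u y]
      exact horth.linearIndependent
    set bw : Basis (Fin 2) ℝ W := basisOfLinearIndependentOfCardEqFinrank hli
      (by rw [hfr]; simp) with hbw
    have hbw0 : bw 0 = u' := by rw [hbw, coe_basisOfLinearIndependentOfCardEqFinrank]; rfl
    have hbw1 : bw 1 = y' := by rw [hbw, coe_basisOfLinearIndependentOfCardEqFinrank]; rfl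
    set mat := LinearMap.toMatrix bw bw B with hmat
    set p := mat 0 0 with hp
    set q := mat 1 0 with hq
    set r := mat 0 1 with hr
    set s := mat 1 1 with hs
    have hsum0 : B (bw 0) = p • bw 0 + q • bw 1 := by
      have h := Basis.sum_repr bw (B (bw 0))
      rw [Fin.sum_univ_two] at h
      rw [← h, hp, hq, hmat]
      simp [LinearMap.toMatrix_apply]
    have hsum1 : B (bw 1) = r • bw 0 + s • bw 1 := by
      have h := Basis.sum_repr bw (B (bw 1))
      rw [Fin.sum_univ_two] at h
      rw [← h, hr, hs, hmat]
      simp [LinearMap.toMatrix_apply]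
    have hnormsq : ∀ p q : ℝ, ‖p • u' + q • y'‖ ^ 2 = p ^ 2 + q ^ 2 := by
      intro p q
      have hin : (inner ℝ (p • u' + q • y') (p • u' + q • y')) = p ^ 2 + q ^ 2 := by
        simp only [inner_add_left, inner_add_right, real_inner_smul_left, real_inner_smul_right,
          hinner_uu, hinner_yy, hinner_uy, hinner_yu]
        ring
      rw [← real_inner_self_eq_norm_sq, hin]
    have hnorm0 : ‖B (bw 0)‖ ^ 2 = p ^ 2 + q ^ 2 := by
      rw [hsum0, hbw0, hbw1, hnormsq]
    have hnorm1 : ‖B (bw 1)‖ ^ 2 = r ^ 2 + s ^ 2 := by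
      rw [hsum1, hbw0, hbw1, hnormsq]
    clear_value p q r s mat
    -- bound the two norms
    have hbnd0 : ‖B (bw 0)‖ ≤ ‖A - F‖ := by
      have hFu : F u = 0 := huker
      have hcoe : ((B (bw 0) : W) : V) = (A - F) u := by
        rw [hbw0, hB, LinearMap.restrict_apply]
        show T u = (A - F) u
        have : (A - F) u = A u - F u := rfl
        rw [this, hFu, sub_zero, hT]
        rfl
      calc ‖B (bw 0)‖ = ‖((B (bw 0) : W) : V)‖ := Submodule.coe_norm _
        _ = ‖(A - F) u‖ := by rw [hcoe]
        _ ≤ ‖A - F‖ * ‖u‖ := ContinuousLinearMap.le_opNorm _ _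
        _ = ‖A - F‖ := by rw [hunorm, mul_one]
    have hbnd1 : ‖B (bw 1)‖ ≤ ‖A‖ := by
      have hcoe : ((B (bw 1) : W) : V) = A y := by
        rw [hbw1, hB, LinearMap.restrict_apply]
        show T y = A y
        rw [hT]; rfl
      calc ‖B (bw 1)‖ = ‖((B (bw 1) : W) : V)‖ := Submodule.coe_norm _
        _ = ‖A y‖ := by rw [hcoe]
        _ ≤ ‖A‖ * ‖y‖ := ContinuousLinearMap.le_opNorm _ _
        _ = ‖A‖ := by rw [hynorm, mul_one]
    have hdet2 : LinearMap.det B = p * s - r * q := by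
      rw [← LinearMap.det_toMatrix bw, ← hmat, Matrix.det_fin_two, ← hp, ← hq, ← hr, ← hs]
    have habs : |p * s - r * q| ≤ ‖B (bw 0)‖ * ‖B (bw 1)‖ := by
      have hsq : (p * s - r * q) ^ 2 ≤ (‖B (bw 0)‖ * ‖B (bw 1)‖) ^ 2 := by
        rw [mul_pow, hnorm0, hnorm1]
        nlinarith [sq_nonneg (p * r + q * s)]
      calc |p * s - r * q| = Real.sqrt ((p * s - r * q) ^ 2) := (Real.sqrt_sq_eq_abs _).symm
        _ ≤ Real.sqrt ((‖B (bw 0)‖ * ‖B (bw 1)‖) ^ 2) := Real.sqrt_le_sqrt hsq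
        _ = ‖B (bw 0)‖ * ‖B (bw 1)‖ := Real.sqrt_sq (by positivity)
    rw [hdet2]
    calc |p * s - r * q| ≤ ‖B (bw 0)‖ * ‖B (bw 1)‖ := habs
      _ ≤ ‖A - F‖ * ‖A‖ :=
        mul_le_mul hbnd0 hbnd1 (norm_nonneg _) (norm_nonneg _)
  -- conclude
  rw [singularValue_one A]
  have hrank0 : LinearMap.rank ((0 : V →L[ℝ] V) : V →ₗ[ℝ] V) < ((2 : ℕ) : Cardinal) := by
    have : ((0 : V →L[ℝ] V) : V →ₗ[ℝ] V) = 0 := rfl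
    rw [this, LinearMap.rank_zero]
    norm_num
  have hS2ne : {r : ℝ | ∃ F : V →L[ℝ] V,
      LinearMap.rank (F : V →ₗ[ℝ] V) < ((2 : ℕ) : Cardinal) ∧ r = ‖A - F‖}.Nonempty :=
    ⟨‖A - 0‖, 0, hrank0, rfl⟩
  by_cases hA0 : ‖A‖ = 0
  · have h := main 0 (by exact_mod_cast hrank0)
    rw [hA0, mul_zero] at h
    calc |LinearMap.det B| ≤ 0 := h
      _ ≤ ‖A‖ * singularValue A 2 := by rw [hA0, zero_mul]
  · have hApos : 0 < ‖A‖ := lt_of_le_of_ne (norm_nonneg _) (Ne.symm hA0)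
    have hle : |LinearMap.det B| / ‖A‖ ≤ singularValue A 2 := by
      apply le_csInf hS2ne
      rintro r ⟨F, hF, rfl⟩
      rw [div_le_iff₀ hApos]
      exact main F (by exact_mod_cast hF)
    calc |LinearMap.det B| = |LinearMap.det B| / ‖A‖ * ‖A‖ := by field_simp
      _ ≤ singularValue A 2 * ‖A‖ := mul_le_mul_of_nonneg_right hle (norm_nonneg _)
      _ = ‖A‖ * singularValue A 2 := mul_comm _ _

lemma charpoly_shift (T : V →ₗ[ℝ] V) (c : ℝ) :
    (T - algebraMap ℝ (Module.End ℝ V) c).charpoly = T.charpoly.comp (X + C c) := by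
  classical
  set b := Module.finBasis ℝ V with hb
  rw [← LinearMap.charpoly_toMatrix (T - algebraMap ℝ (Module.End ℝ V) c) b,
    ← LinearMap.charpoly_toMatrix T b, map_sub, LinearMap.toMatrix_algebraMap]
  apply Polynomial.funext
  intro t
  rw [Polynomial.eval_comp, Polynomial.eval_add, Polynomial.eval_X, Polynomial.eval_C,
    eval_charpoly', eval_charpoly']
  congr 1
  have hscalar : (Matrix.scalar (Fin (Module.finrank ℝ V)) c :
      Matrix (Fin (Module.finrank ℝ V)) (Fin (Module.finrank ℝ V)) ℝ) = c • 1 := by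
    ext i j
    by_cases hij : i = j
    · subst hij; simp
    · simp [Matrix.one_apply_ne hij, Matrix.scalar_apply, Matrix.diagonal_apply_ne _ hij]
  rw [hscalar, add_smul]
  abel

lemma exists_plane_B2 (T : V →ₗ[ℝ] V) {c : ℝ} (hdvd : (X - C c) ^ 2 ∣ T.charpoly) :
    ∃ (W : Submodule ℝ V) (hW : ∀ x ∈ W, T x ∈ W),
      Module.finrank ℝ W = 2 ∧ |LinearMap.det (T.restrict hW)| = c ^ 2 := by
  classical
  set N : Module.End ℝ V := T - algebraMap ℝ (Module.End ℝ V) c with hN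
  have hNapp : ∀ v : V, N v = T v - c • v := by
    intro v
    simp [hN, Module.algebraMap_end_apply]
  have hchar : N.charpoly = T.charpoly.comp (X + C c) := charpoly_shift T c
  have hXdvd : (X : ℝ[X]) ^ 2 ∣ N.charpoly := by
    obtain ⟨g, hg⟩ := hdvd
    rw [hchar, hg, Polynomial.mul_comp, Polynomial.pow_comp, Polynomial.sub_comp,
      Polynomial.X_comp, Polynomial.C_comp]
    have hXc : (X + C c - C c : ℝ[X]) = X := by ring
    rw [hXc]
    exact Dvd.intro _ rfl
  by_cases hker2 : ∃ v, N (N v) = 0 ∧ N v ≠ 0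
  · obtain ⟨v, hv2, hv1⟩ := hker2
    have hli : LinearIndependent ℝ ![v, N v] := by
      rw [LinearIndependent.pair_iff]
      intro s t hst
      have h1 : N (s • v + t • N v) = 0 := by rw [hst]; simp
      rw [map_add, map_smul, map_smul, hv2, smul_zero, add_zero] at h1
      have hs : s = 0 := by
        by_contra hs
        exact hv1 (by
          have := smul_eq_zero.mp h1
          rcases this with h | h
          · exact absurd h hs
          · exact h)
      subst hs
      rw [zero_smul, zero_add] at hst
      rcases smul_eq_zero.mp hst with h | h
      · exact ⟨rfl, h⟩
      · exact absurd h hv1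
    have hTv : T v = c • v + (1 : ℝ) • N v := by
      rw [hNapp, one_smul]; abel
    have hTNv : T (N v) = (0 : ℝ) • v + c • N v := by
      have := hNapp (N v)
      rw [hv2] at this
      rw [zero_smul, zero_add]
      exact sub_eq_zero.mp this.symm
    obtain ⟨W, hW, h2, hdet⟩ := det_restrict_span T hli hTv hTNv
    refine ⟨W, hW, h2, ?_⟩
    rw [hdet]
    rw [show c * c - 1 * 0 = c ^ 2 by ring, abs_of_nonneg (sq_nonneg c)]
  · push_neg at hker2
    have hstab : ∀ (k : ℕ) (v : V), (N ^ k) v = 0 → N v = 0 := by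
      intro k
      induction k with
      | zero => intro v hv; simp at hv; rw [hv]; simp
      | succ k ih =>
        intro v hv
        rw [pow_succ, Module.End.mul_apply] at hv
        exact hker2 v (ih (N v) hv)
    have hgen : Module.End.maxGenEigenspace N 0 ≤ LinearMap.ker N := by
      intro x hx
      rw [Module.End.mem_maxGenEigenspace] at hx
      obtain ⟨k, hk⟩ := hx
      rw [zero_smul, sub_zero] at hk
      exact LinearMap.mem_ker.mpr (hstab k x hk)
    have hfin : Module.finrank ℝ (Module.End.maxGenEigenspace N 0) =
        (LinearMap.charpoly N).natTrailingDegree := LinearMap.finrank_maxGenEigenspace_zero_eq N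
    have h2le : 2 ≤ (LinearMap.charpoly N).natTrailingDegree := by
      obtain ⟨g, hg⟩ := hXdvd
      apply Polynomial.le_natTrailingDegree (LinearMap.charpoly_monic N).ne_zero
      intro m hm
      rw [hg, mul_comm, Polynomial.coeff_mul_X_pow']
      simp [Nat.not_le.mpr hm]
    have hker : 2 ≤ Module.finrank ℝ (LinearMap.ker N) := by
      calc 2 ≤ (LinearMap.charpoly N).natTrailingDegree := h2le
        _ = Module.finrank ℝ (Module.End.maxGenEigenspace N 0) := hfin.symm
        _ ≤ Module.finrank ℝ (LinearMap.ker N) := Submodule.finrank_mono hgen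
    -- extract two independent eigenvectors
    have hnebot : LinearMap.ker N ≠ ⊥ := by
      intro hbot
      rw [hbot] at hker
      simp at hker
    obtain ⟨v, hvmem, hvne⟩ := Submodule.ne_bot_iff _ |>.mp hnebot
    have hnotle : ¬ (LinearMap.ker N ≤ Submodule.span ℝ {v}) := by
      intro hle
      have := Submodule.finrank_mono hle
      rw [finrank_span_singleton hvne] at this
      omega
    obtain ⟨w, hwmem, hwnot⟩ := SetLike.not_le_iff_exists.mp hnotle
    have hli : LinearIndependent ℝ ![v, w] := by
      rw [LinearIndependent.pair_iff]
      intro s t hst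
      have ht : t = 0 := by
        by_contra ht
        apply hwnot
        have h1 : t • w = -(s • v) := eq_neg_of_add_eq_zero_right hst
        have h2 : w = (t⁻¹ * -s) • v := by
          calc w = t⁻¹ • (t • w) := by rw [smul_smul, inv_mul_cancel₀ ht, one_smul]
            _ = t⁻¹ • -(s • v) := by rw [h1]
            _ = (t⁻¹ * -s) • v := by rw [← neg_smul, smul_smul]
        rw [h2]
        exact Submodule.smul_mem _ _ (Submodule.mem_span_singleton_self v)
      subst ht
      rw [zero_smul, add_zero] at hst
      rcases smul_eq_zero.mp hst with h | h
      · exact ⟨h, rfl⟩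
      · exact absurd h hvne
    have hNv : N v = 0 := hvmem
    have hNw : N w = 0 := hwmem
    have hTv : T v = c • v + (0 : ℝ) • w := by
      have := hNapp v
      rw [hNv] at this
      rw [zero_smul, add_zero]
      exact sub_eq_zero.mp this.symm
    have hTw : T w = (0 : ℝ) • v + c • w := by
      have := hNapp w
      rw [hNw] at this
      rw [zero_smul, zero_add]
      exact sub_eq_zero.mp this.symm
    obtain ⟨W, hW, h2, hdet⟩ := det_restrict_span T hli hTv hTw
    refine ⟨W, hW, h2, ?_⟩
    rw [hdet, show c * c - 0 * 0 = c ^ 2 by ring, abs_of_nonneg (sq_nonneg c)]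

lemma exists_eigenvector_real (T : V →ₗ[ℝ] V) {c : ℝ}
    (hc : ((c : ℂ)) ∈ ((T.charpoly).map (algebraMap ℝ ℂ)).roots) :
    ∃ u : V, u ≠ 0 ∧ T u = c • u := by
  obtain ⟨x, y, hxy, hTx, hTy⟩ := exists_pair T hc
  simp only [Complex.ofReal_re, Complex.ofReal_im, zero_smul, sub_zero, zero_add] at hTx hTy
  by_cases hx : x = 0
  · exact ⟨y, fun hy => hxy ⟨hx, hy⟩, hTy⟩
  · exact ⟨x, hx, hTx⟩


theorem proximal_of_specRadius_sq_gt (A : V →L[ℝ] V)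
    (h : specRadius (A : V →ₗ[ℝ] V) ^ 2 > singularValue A 1 * singularValue A 2) :
    IsProximal (A : V →ₗ[ℝ] V) := by
  classical
  by_contra hP
  set T : V →ₗ[ℝ] V := (A : V →ₗ[ℝ] V) with hT
  have hσnn : 0 ≤ singularValue A 1 * singularValue A 2 :=
    mul_nonneg (by rw [singularValue_one]; exact norm_nonneg _) (singularValue_two_nonneg A)
  set S : Set ℝ := {r : ℝ | ∃ z ∈ complexEigenvalues T, ‖z‖ = r} with hS
  have hρdef : specRadius T = sSup S := rfl
  have hSfin : S.Finite := by
    have hsub : S ⊆ (fun z : ℂ => ‖z‖) '' {z | z ∈ complexEigenvalues T} := by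
      rintro r ⟨z, hz, rfl⟩; exact ⟨z, hz, rfl⟩
    exact (((complexEigenvalues T).finite_toSet).image _).subset hsub
  have hSne : S.Nonempty := by
    by_contra hemp
    rw [Set.not_nonempty_iff_eq_empty] at hemp
    rw [hρdef, hemp, Real.sSup_empty] at h
    norm_num at h
    linarith
  have hρmem : specRadius T ∈ S := by rw [hρdef]; exact Set.Nonempty.csSup_mem hSne hSfin
  have hρub : ∀ z ∈ complexEigenvalues T, ‖z‖ ≤ specRadius T := by
    intro z hz
    rw [hρdef]
    exact le_csSup hSfin.bddAbove ⟨z, hz, rfl⟩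
  set ρ := specRadius T with hρ
  obtain ⟨z₀, hz₀m, hz₀abs⟩ := hρmem
  have hρnn : 0 ≤ ρ := hz₀abs ▸ norm_nonneg _
  have hρpos : 0 < ρ := by
    rcases eq_or_lt_of_le hρnn with hq | hq
    · rw [← hq] at h; norm_num at h; linarith
    · exact hq
  -- all eigenvalues of maximal modulus are real
  have hreal : ∀ z ∈ complexEigenvalues T, ‖z‖ = ρ → z.im = 0 := by
    intro z hzm hzabs
    by_contra him
    obtain ⟨x, y, hxy0, hTx, hTy⟩ := exists_pair T hzm
    have hx0 : x ≠ 0 := by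
      intro hx
      apply hxy0
      refine ⟨hx, ?_⟩
      rw [hx, map_zero, smul_zero, zero_sub] at hTx
      rcases smul_eq_zero.mp (neg_eq_zero.mp hTx.symm) with him0 | hy0
      · exact absurd him0 him
      · exact hy0
    have hli : LinearIndependent ℝ ![x, y] := by
      rw [LinearIndependent.pair_iff]
      intro α β hst
      have happ : α • (z.re • x - z.im • y) + β • (z.im • x + z.re • y) = (0 : V) := by
        have hcong := congrArg T hst
        rw [map_add, map_smul, map_smul, hTx, hTy, map_zero] at hcong
        exact hcong
      have h3 : z.im • (β • x - α • y) = (0 : V) := by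
        linear_combination (norm := module) happ - z.re • hst
      have h4 : β • x - α • y = (0 : V) := by
        rcases smul_eq_zero.mp h3 with h' | h'
        · exact absurd h' him
        · exact h'
      have h5 : (α ^ 2 + β ^ 2) • x = (0 : V) := by
        linear_combination (norm := module) α • hst + β • h4
      have h6 : α ^ 2 + β ^ 2 = 0 := by
        rcases smul_eq_zero.mp h5 with h' | h'
        · exact h'
        · exact absurd h' hx0
      constructor <;> nlinarith [sq_nonneg α, sq_nonneg β]
    have hTx' : T x = z.re • x + (-z.im) • y := by rw [hTx, neg_smul, ← sub_eq_add_neg]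
    have hTy' : T y = z.im • x + z.re • y := hTy
    obtain ⟨W, hW, h2, hdet⟩ := det_restrict_span T hli hTx' hTy'
    have hkey := key_det_le A hW h2
    rw [hdet] at hkey
    have hval : z.re * z.re - -z.im * z.im = ρ ^ 2 := by
      have h1 : z.re * z.re + z.im * z.im = Complex.normSq z := (Complex.normSq_apply z).symm
      have h2' : Complex.normSq z = ‖z‖ ^ 2 := (Complex.sq_norm z).symm
      rw [← hzabs]
      nlinarith [h1, h2']
    rw [hval] at hkey
    rw [abs_of_nonneg (by positivity)] at hkey
    linarith
  have hz₀im : z₀.im = 0 := hreal z₀ hz₀m hz₀abs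
  set c := z₀.re with hc
  have hz₀c : z₀ = (c : ℂ) := Complex.ext (by simp [hc]) (by simp [hz₀im])
  have hcabs : |c| = ρ := by rw [← Real.norm_eq_abs, ← Complex.norm_real, ← hz₀c, hz₀abs]
  have hcne : c ≠ 0 := by
    intro h0
    rw [h0, abs_zero] at hcabs
    linarith
  rw [IsProximal] at hP
  push_neg at hP
  have hP₀ := hP z₀ hz₀m
  by_cases hcount : (complexEigenvalues T).count z₀ = 1
  · -- there is another eigenvalue of the same modulus; it must be -c
    obtain ⟨w, hwm, hwne, hwge⟩ := hP₀ hcount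
    have hwabs : ‖w‖ = ρ :=
      le_antisymm (hρub w hwm) (by rw [← hz₀abs]; exact hwge)
    have hwim : w.im = 0 := hreal w hwm hwabs
    set d := w.re with hd
    have hwd : w = (d : ℂ) := Complex.ext (by simp [hd]) (by simp [hwim])
    have hdabs : |d| = ρ := by rw [← Real.norm_eq_abs, ← Complex.norm_real, ← hwd, hwabs]
    have hdc : d = -c := by
      rcases abs_eq_abs.mp (hdabs.trans hcabs.symm) with h' | h'
      · exfalso
        apply hwne
        rw [hwd, h', ← hz₀c]
      · exact h'
    obtain ⟨u, hu0, hTu⟩ := exists_eigenvector_real T (hz₀c ▸ hz₀m)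
    obtain ⟨v, hv0, hTv⟩ := exists_eigenvector_real T (hwd ▸ hwm)
    have hcd : c ≠ d := by
      rw [hdc]
      intro h'
      apply hcne
      linarith
    have hli : LinearIndependent ℝ ![u, v] := by
      rw [LinearIndependent.pair_iff]
      intro α β hst
      have happ : α • (c • u) + β • (d • v) = (0 : V) := by
        have hcong := congrArg T hst
        rw [map_add, map_smul, map_smul, hTu, hTv, map_zero] at hcong
        exact hcong
      have h3 : (d - c) • (β • v) = (0 : V) := by
        linear_combination (norm := module) happ - c • hst
      have hβ : β = 0 := by
        rcases smul_eq_zero.mp h3 with h' | h'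
        · exact absurd (sub_eq_zero.mp h') (Ne.symm hcd)
        · rcases smul_eq_zero.mp h' with h'' | h''
          · exact h''
          · exact absurd h'' hv0
      subst hβ
      rw [zero_smul, add_zero] at hst
      rcases smul_eq_zero.mp hst with h' | h'
      · exact ⟨h', rfl⟩
      · exact absurd h' hu0
    have hTu' : T u = c • u + (0 : ℝ) • v := by rw [hTu, zero_smul, add_zero]
    have hTv' : T v = (0 : ℝ) • u + d • v := by rw [hTv, zero_smul, zero_add]
    obtain ⟨W, hW, h2, hdet⟩ := det_restrict_span T hli hTu' hTv'
    have hkey := key_det_le A hW h2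
    rw [hdet] at hkey
    have hval : |c * d - 0 * 0| = ρ ^ 2 := by
      rw [hdc]
      rw [show c * -c - 0 * 0 = -(c ^ 2) by ring, abs_neg, abs_of_nonneg (sq_nonneg c),
        ← sq_abs, hcabs]
    rw [hval] at hkey
    linarith
  · -- z₀ is a multiple root
    have hcount2 : 2 ≤ (complexEigenvalues T).count z₀ := by
      have h1 : 1 ≤ (complexEigenvalues T).count z₀ := Multiset.one_le_count_iff_mem.mpr hz₀m
      omega
    have hmult : 2 ≤ Polynomial.rootMultiplicity z₀ ((T.charpoly).map (algebraMap ℝ ℂ)) := by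
      rw [← Polynomial.count_roots]
      exact hcount2
    have hdvdC : ((X : ℂ[X]) - Polynomial.C z₀) ^ 2 ∣ (T.charpoly).map (algebraMap ℝ ℂ) :=
      dvd_trans (pow_dvd_pow _ hmult) (Polynomial.pow_rootMultiplicity_dvd _ _)
    have hdvdR : ((X : ℝ[X]) - Polynomial.C c) ^ 2 ∣ T.charpoly := by
      rw [← Polynomial.map_dvd_map' (algebraMap ℝ ℂ)]
      have hmap : (((X : ℝ[X]) - Polynomial.C c) ^ 2).map (algebraMap ℝ ℂ) =
          ((X : ℂ[X]) - Polynomial.C z₀) ^ 2 := by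
        rw [Polynomial.map_pow, Polynomial.map_sub, Polynomial.map_X, Polynomial.map_C, hz₀c]
        norm_num
      rw [hmap]
      exact hdvdC
    obtain ⟨W, hW, h2, hdet⟩ := exists_plane_B2 T hdvdR
    have hkey := key_det_le A hW h2
    rw [hdet] at hkey
    have hval : c ^ 2 = ρ ^ 2 := by rw [← sq_abs, hcabs]
    linarith
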